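/- arXiv:2004.06467 — 2 statements merged into one kernel-verified Lean document; each statement's English description precedes it below -/
import Mathlib

section
/- Let k ≥ 1 be an integer and let F_k(x, λ²) denote the CDF of the noncentral chi-square distribution with k degrees of freedom and noncentrality parameter λ², i.e., the CDF of |Z + λ e₁|² where Z is a standard Gaussian vector in ℝ^k and e₁ is the first standard basis vector. Then for all x ∈ ℝ and all λ₁, λ₂ ≥ 0: | F_k(x, λ₁²) − F_k(x, λ₂²) | ≤ 2 · sup_{y ∈ ℝ} φ(y) · |λ₁ − λ₂| = √(2/π) · |λ₁ − λ₂|, where φ is the standard normal density. -/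
open MeasureTheory ProbabilityTheory Filter Set
open scoped ENNReal NNReal Classical

/-- Standard normal CDF. -/
noncomputable def stdPhi (x : ℝ) : ℝ := (gaussianReal 0 1 (Set.Iic x)).toReal

/-- Standard normal density. -/
noncomputable def stdphi (x : ℝ) : ℝ := (Real.sqrt (2 * Real.pi))⁻¹ * Real.exp (-(x ^ 2) / 2)

/-- The law with CDF `(1-ρn) Φ(x/θ₀) + ρn H(x)` where `μH` has CDF `H`. -/
noncomputable def mixLaw (θ₀ : ℝ) (μH : Measure ℝ) (ρn : ℝ) : Measure ℝ :=
  ENNReal.ofReal (1 - ρn) • gaussianReal 0 ⟨θ₀ ^ 2, sq_nonneg θ₀⟩ + ENNReal.ofReal ρn • μH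

/-- Bernoulli law on `ℝ` with success probability `q`. -/
noncomputable def berLaw (q : ℝ) : Measure ℝ :=
  ENNReal.ofReal q • Measure.dirac (1 : ℝ) + ENNReal.ofReal (1 - q) • Measure.dirac (0 : ℝ)

/-- The shift `Δ₀(x, Π) = Σ_{j=0}^p (E Φ((x + β_j ξ)/θ₀) − Φ(x/θ₀))`, `β₀ = −1`. -/
noncomputable def Delta0 {p : ℕ} (β : Fin p → ℝ) (θ₀ : ℝ) (PiM : Measure ℝ) (x : ℝ) : ℝ :=
  ((∫ u, stdPhi ((x + (-1) * u) / θ₀) ∂PiM) - stdPhi (x / θ₀)) +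
    ∑ j : Fin p, ((∫ u, stdPhi ((x + β j * u) / θ₀) ∂PiM) - stdPhi (x / θ₀))

/-- Symmetrized shift `Δ_S(x, Π)`. -/
noncomputable def DeltaS {p : ℕ} (β : Fin p → ℝ) (θ₀ : ℝ) (PiM : Measure ℝ) (x : ℝ) : ℝ :=
  (Delta0 β θ₀ PiM x - Delta0 β θ₀ PiM (-x)) / 2

/-- Empirical distribution function of `w 1, …, w n`. -/
noncomputable def edf (w : ℤ → ℝ) (n : ℕ) (x : ℝ) : ℝ :=
  (n : ℝ)⁻¹ * ∑ t ∈ Finset.Icc (1 : ℤ) (n : ℤ), if w t ≤ x then (1 : ℝ) else 0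

/-- Indicator of the symmetric cell `B_j⁺ ∪ B_j⁻` (cells indexed `1,…,m`; `x_m = ∞`). -/
noncomputable def indB (m : ℕ) (xpt : ℕ → ℝ) (j : ℕ) (u : ℝ) : ℝ :=
  if j < m then
    if (xpt (j - 1) < u ∧ u ≤ xpt j) ∨ (-(xpt j) < u ∧ u ≤ -(xpt (j - 1))) then 1 else 0
  else if (xpt (m - 1) < u ∨ u ≤ -(xpt (m - 1))) then 1 else 0

/-- `2(F(x_j) − F(x_{j−1}))` for a CDF `F`, with `x_m = ∞`. -/
noncomputable def cellProb (m : ℕ) (xpt : ℕ → ℝ) (F : ℝ → ℝ) (j : ℕ) : ℝ :=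
  if j < m then 2 * (F (xpt j) - F (xpt (j - 1))) else 2 * (1 - F (xpt (m - 1)))

/-- `p_j(θ) = 2(Φ(x_j/θ) − Φ(x_{j−1}/θ))`. -/
noncomputable def pcell (m : ℕ) (xpt : ℕ → ℝ) (θ : ℝ) (j : ℕ) : ℝ :=
  cellProb m xpt (fun x => stdPhi (x / θ)) j

/-- `p_j'(θ)`, the derivative of `p_j(θ)` in `θ`. -/
noncomputable def pcell' (m : ℕ) (xpt : ℕ → ℝ) (θ : ℝ) (j : ℕ) : ℝ :=
  if j < m then
    2 * (stdphi (xpt j / θ) * (-(xpt j) / θ ^ 2) -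
      stdphi (xpt (j - 1) / θ) * (-(xpt (j - 1)) / θ ^ 2))
  else 2 * (stdphi (xpt (m - 1) / θ) * (xpt (m - 1) / θ ^ 2))

/-- `δ_j(Π) = 2[Δ_S(x_j, Π) − Δ_S(x_{j−1}, Π)]`, with `Δ_S(x_m, Π) = Δ_S(∞, Π) = 0`. -/
noncomputable def deltaCell {p : ℕ} (β : Fin p → ℝ) (θ₀ : ℝ) (m : ℕ) (xpt : ℕ → ℝ)
    (PiM : Measure ℝ) (j : ℕ) : ℝ :=
  if j < m then 2 * (DeltaS β θ₀ PiM (xpt j) - DeltaS β θ₀ PiM (xpt (j - 1)))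
  else 2 * (0 - DeltaS β θ₀ PiM (xpt (m - 1)))

/-- Euclidean norm of the vector `δ(Π)`. -/
noncomputable def deltaNorm {p : ℕ} (β : Fin p → ℝ) (θ₀ : ℝ) (m : ℕ) (xpt : ℕ → ℝ)
    (PiM : Measure ℝ) : ℝ :=
  Real.sqrt (∑ j ∈ Finset.Icc 1 m, (deltaCell β θ₀ m xpt PiM j) ^ 2)

/-- Number of `w t`, `1 ≤ t ≤ n`, in `B_j⁺ ∪ B_j⁻` (as a real number). -/
noncomputable def cellCount (m : ℕ) (xpt : ℕ → ℝ) (w : ℤ → ℝ) (n : ℕ) (j : ℕ) : ℝ :=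
  ∑ t ∈ Finset.Icc (1 : ℤ) (n : ℤ), indB m xpt j (w t)

/-- CDF of the noncentral chi-square law with `k` degrees of freedom and
noncentrality `lam²`: the law of `|Z + lam·e₁|²` for `Z` standard Gaussian in `ℝ^k`. -/
noncomputable def ncChiSqCDF (k : ℕ) (lam : ℝ) (x : ℝ) : ℝ :=
  ((Measure.pi fun _ : Fin k => gaussianReal 0 1)
    {zv | (∑ j, (zv j + if (j : ℕ) = 0 then lam else 0) ^ 2) ≤ x}).toReal

/-- Noncentrality parameter `|(E_m − α₀α₀ᵀ) P₀^{−1/2} w|²`. -/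
noncomputable def lamSq (m : ℕ) (xpt : ℕ → ℝ) (θ₀ : ℝ) (w : ℕ → ℝ) : ℝ :=
  let b : ℕ → ℝ := fun j => pcell' m xpt θ₀ j / Real.sqrt (pcell m xpt θ₀ j)
  let a : ℕ → ℝ := fun j => b j / Real.sqrt (∑ l ∈ Finset.Icc 1 m, b l ^ 2)
  let u : ℕ → ℝ := fun j => w j / Real.sqrt (pcell m xpt θ₀ j)
  ∑ j ∈ Finset.Icc 1 m, (u j - (∑ i ∈ Finset.Icc 1 m, a i * u i) * a j) ^ 2

/-- The component `(α₀)_j = (b₀/|b₀|)_j` (cells indexed `1,…,m`). -/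
noncomputable def alpha0 (m : ℕ) (xpt : ℕ → ℝ) (θ₀ : ℝ) (j : ℕ) : ℝ :=
  (pcell' m xpt θ₀ j / Real.sqrt (pcell m xpt θ₀ j)) /
    Real.sqrt (∑ l ∈ Finset.Icc 1 m, (pcell' m xpt θ₀ l / Real.sqrt (pcell m xpt θ₀ l)) ^ 2)

/-- The matrix `(E_m − α₀α₀ᵀ) P₀^{−1/2}`. -/
noncomputable def projMat (m : ℕ) (xpt : ℕ → ℝ) (θ₀ : ℝ) : Matrix (Fin m) (Fin m) ℝ :=
  Matrix.of fun i j =>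
    ((if i = j then (1 : ℝ) else 0) - alpha0 m xpt θ₀ ((i : ℕ) + 1) * alpha0 m xpt θ₀ ((j : ℕ) + 1)) *
      (Real.sqrt (pcell m xpt θ₀ ((j : ℕ) + 1)))⁻¹

/-- Euclidean operator norm of `(E_m − α₀α₀ᵀ) P₀^{−1/2}`. -/
noncomputable def projMatNorm (m : ℕ) (xpt : ℕ → ℝ) (θ₀ : ℝ) : ℝ :=
  ‖LinearMap.toContinuousLinearMap (Matrix.toEuclideanLin (projMat m xpt θ₀))‖

-- Gaussian density bound
lemma gauss_set_le (s : Set ℝ) :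
    gaussianReal 0 1 s ≤ ENNReal.ofReal (Real.sqrt (2 * Real.pi))⁻¹ * volume s := by
  rw [gaussianReal_apply 0 one_ne_zero s]
  refine le_trans (lintegral_mono fun y => ?_) (le_of_eq (setLIntegral_const s _))
  rw [gaussianPDF_def]
  refine ENNReal.ofReal_le_ofReal ?_
  unfold gaussianPDFReal
  simp only [NNReal.coe_one, mul_one, sub_zero]
  exact mul_le_of_le_one_right (by positivity)
    (Real.exp_le_one_iff.2 (by nlinarith [sq_nonneg y]))

lemma gauss_Ico_le {a b d : ℝ} (hd : 0 ≤ d) (h : b - a ≤ d) :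
    gaussianReal 0 1 (Set.Ico a b) ≤ ENNReal.ofReal ((Real.sqrt (2 * Real.pi))⁻¹ * d) := by
  refine le_trans (gauss_set_le _) ?_
  rw [Real.volume_Ico, ← ENNReal.ofReal_mul (by positivity)]
  exact ENNReal.ofReal_le_ofReal (by
    apply mul_le_mul_of_nonneg_left h (by positivity))

lemma gauss_Ioc_le {a b d : ℝ} (hd : 0 ≤ d) (h : b - a ≤ d) :
    gaussianReal 0 1 (Set.Ioc a b) ≤ ENNReal.ofReal ((Real.sqrt (2 * Real.pi))⁻¹ * d) := by
  refine le_trans (gauss_set_le _) ?_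
  rw [Real.volume_Ioc, ← ENNReal.ofReal_mul (by positivity)]
  exact ENNReal.ofReal_le_ofReal (by
    apply mul_le_mul_of_nonneg_left h (by positivity))

lemma slice_bound (r l₁ l₂ : ℝ) :
    gaussianReal 0 1 {a : ℝ | (a + l₁) ^ 2 ≤ r} ≤
      gaussianReal 0 1 {a : ℝ | (a + l₂) ^ 2 ≤ r} +
        ENNReal.ofReal (2 * (Real.sqrt (2 * Real.pi))⁻¹ * |l₁ - l₂|) := by
  rcases lt_or_ge r 0 with hr | hr
  · have he : {a : ℝ | (a + l₁) ^ 2 ≤ r} = ∅ :=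
      Set.eq_empty_of_forall_notMem fun a h => absurd (le_trans (sq_nonneg _) h) (not_le.2 hr)
    rw [he, measure_empty]
    exact zero_le
  · set s := Real.sqrt r with hs
    have hchar : ∀ l : ℝ, {a : ℝ | (a + l) ^ 2 ≤ r} = Set.Icc (-s - l) (s - l) := by
      intro l
      ext a
      simp only [Set.mem_setOf_eq, Set.mem_Icc]
      constructor
      · intro h
        have h1 : |a + l| ≤ s := by
          rw [← Real.sqrt_sq_eq_abs]; exact Real.sqrt_le_sqrt h
        rw [abs_le] at h1
        constructor <;> linarith [h1.1, h1.2]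
      · rintro ⟨ha1, ha2⟩
        calc (a + l) ^ 2 ≤ s ^ 2 := sq_le_sq' (by linarith) (by linarith)
          _ = r := Real.sq_sqrt hr
    rw [hchar l₁, hchar l₂]
    have hsub : Set.Icc (-s - l₁) (s - l₁) ⊆
        Set.Icc (-s - l₂) (s - l₂) ∪
          (Set.Ico (-s - l₁) (-s - l₂) ∪ Set.Ioc (s - l₂) (s - l₁)) := by
      intro a ha
      simp only [Set.mem_Icc] at ha
      by_cases h1 : a < -s - l₂
      · exact Or.inr (Or.inl ⟨ha.1, h1⟩)
      by_cases h2 : s - l₂ < a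
      · exact Or.inr (Or.inr ⟨h2, ha.2⟩)
      · exact Or.inl ⟨le_of_not_gt h1, le_of_not_gt h2⟩
    have habs : 0 ≤ |l₁ - l₂| := abs_nonneg _
    calc gaussianReal 0 1 (Set.Icc (-s - l₁) (s - l₁))
        ≤ gaussianReal 0 1 (Set.Icc (-s - l₂) (s - l₂)) +
            (gaussianReal 0 1 (Set.Ico (-s - l₁) (-s - l₂)) +
              gaussianReal 0 1 (Set.Ioc (s - l₂) (s - l₁))) :=
          le_trans (measure_mono hsub)
            (le_trans (measure_union_le _ _) (add_le_add_right (measure_union_le _ _) _))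
      _ ≤ gaussianReal 0 1 (Set.Icc (-s - l₂) (s - l₂)) +
            (ENNReal.ofReal ((Real.sqrt (2 * Real.pi))⁻¹ * |l₁ - l₂|) +
              ENNReal.ofReal ((Real.sqrt (2 * Real.pi))⁻¹ * |l₁ - l₂|)) := by
          gcongr
          · refine gauss_Ico_le habs ?_
            have h : -s - l₂ - (-s - l₁) = l₁ - l₂ := by ring
            rw [h]
            exact le_abs_self _
          · refine gauss_Ioc_le habs ?_
            have h : s - l₁ - (s - l₂) = l₂ - l₁ := by ring
            rw [h, abs_sub_comm]
            exact le_abs_self _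
      _ = gaussianReal 0 1 (Set.Icc (-s - l₂) (s - l₂)) +
            ENNReal.ofReal (2 * (Real.sqrt (2 * Real.pi))⁻¹ * |l₁ - l₂|) := by
          have h : ENNReal.ofReal ((Real.sqrt (2 * Real.pi))⁻¹ * |l₁ - l₂|) +
              ENNReal.ofReal ((Real.sqrt (2 * Real.pi))⁻¹ * |l₁ - l₂|) =
              ENNReal.ofReal (2 * (Real.sqrt (2 * Real.pi))⁻¹ * |l₁ - l₂|) := by
            rw [← ENNReal.ofReal_add (by positivity) (by positivity)]
            congr 1
            ring
          rw [h]

lemma ncChiSq_eq (n : ℕ) (lam x : ℝ) :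
    ncChiSqCDF (n + 1) lam x =
      (∫⁻ g : Fin n → ℝ,
        gaussianReal 0 1 {a : ℝ | (a + lam) ^ 2 ≤ x - ∑ j, (g j) ^ 2}
          ∂(Measure.pi fun _ : Fin n => gaussianReal 0 1)).toReal := by
  unfold ncChiSqCDF
  congr 1
  set T : Set (ℝ × (Fin n → ℝ)) := {p | (p.1 + lam) ^ 2 + ∑ j, (p.2 j) ^ 2 ≤ x} with hT
  have hTm : MeasurableSet T := by
    refine measurableSet_le ?_ measurable_const
    exact ((measurable_fst.add_const lam).pow_const 2).add
      (Finset.measurable_sum Finset.univ fun j _ =>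
        ((measurable_pi_apply j).comp measurable_snd).pow_const 2)
  have hmp := measurePreserving_piFinSuccAbove (fun _ : Fin (n + 1) => gaussianReal 0 1) 0
  have hpre : (MeasurableEquiv.piFinSuccAbove (fun _ : Fin (n + 1) => ℝ) 0) ⁻¹' T =
      {zv : Fin (n + 1) → ℝ | (∑ j, (zv j + if (j : ℕ) = 0 then lam else 0) ^ 2) ≤ x} := by
    ext f
    simp only [Set.mem_preimage, MeasurableEquiv.piFinSuccAbove_apply, Set.mem_setOf_eq,
      Fin.insertNthEquiv, Equiv.coe_fn_symm_mk, Fin.removeNth, hT]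
    rw [Fin.sum_univ_succ]
    simp [Fin.succ_ne_zero, Fin.succAbove]
  rw [← hpre, hmp.measure_preimage hTm.nullMeasurableSet,
    Measure.prod_apply_symm hTm]
  refine lintegral_congr fun g => ?_
  congr 1
  ext a
  simp only [Set.mem_preimage, Set.mem_setOf_eq, hT]
  constructor <;> intro h <;> linarith

lemma ncChiSq_le (n : ℕ) (x l₁ l₂ : ℝ) :
    ncChiSqCDF (n + 1) l₁ x ≤
      ncChiSqCDF (n + 1) l₂ x + 2 * (Real.sqrt (2 * Real.pi))⁻¹ * |l₁ - l₂| := by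
  rw [ncChiSq_eq, ncChiSq_eq]
  set ν := Measure.pi fun _ : Fin n => gaussianReal 0 1 with hν
  set C := 2 * (Real.sqrt (2 * Real.pi))⁻¹ * |l₁ - l₂| with hC
  have hC0 : 0 ≤ C := by positivity
  have h1 : (∫⁻ g : Fin n → ℝ, gaussianReal 0 1 {a : ℝ | (a + l₁) ^ 2 ≤ x - ∑ j, (g j) ^ 2} ∂ν) ≤
      (∫⁻ g : Fin n → ℝ, gaussianReal 0 1 {a : ℝ | (a + l₂) ^ 2 ≤ x - ∑ j, (g j) ^ 2} ∂ν) +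
        ENNReal.ofReal C := by
    calc (∫⁻ g : Fin n → ℝ, gaussianReal 0 1 {a : ℝ | (a + l₁) ^ 2 ≤ x - ∑ j, (g j) ^ 2} ∂ν)
        ≤ ∫⁻ g : Fin n → ℝ,
            (gaussianReal 0 1 {a : ℝ | (a + l₂) ^ 2 ≤ x - ∑ j, (g j) ^ 2} +
              ENNReal.ofReal C) ∂ν :=
          lintegral_mono fun g => slice_bound _ l₁ l₂
      _ = (∫⁻ g : Fin n → ℝ, gaussianReal 0 1 {a : ℝ | (a + l₂) ^ 2 ≤ x - ∑ j, (g j) ^ 2} ∂ν) +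
            ENNReal.ofReal C := by
          rw [lintegral_add_right _ measurable_const, lintegral_const, measure_univ, mul_one]
  have hfin : (∫⁻ g : Fin n → ℝ,
      gaussianReal 0 1 {a : ℝ | (a + l₂) ^ 2 ≤ x - ∑ j, (g j) ^ 2} ∂ν) ≠ ⊤ := by
    refine ne_top_of_le_ne_top (by simp : (1 : ℝ≥0∞) ≠ ⊤) ?_
    calc (∫⁻ g : Fin n → ℝ, gaussianReal 0 1 {a : ℝ | (a + l₂) ^ 2 ≤ x - ∑ j, (g j) ^ 2} ∂ν)
        ≤ ∫⁻ _ : Fin n → ℝ, 1 ∂ν := lintegral_mono fun g => prob_le_one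
      _ = 1 := by rw [lintegral_one, measure_univ]
  calc (∫⁻ g : Fin n → ℝ,
        gaussianReal 0 1 {a : ℝ | (a + l₁) ^ 2 ≤ x - ∑ j, (g j) ^ 2} ∂ν).toReal
      ≤ ((∫⁻ g : Fin n → ℝ, gaussianReal 0 1 {a : ℝ | (a + l₂) ^ 2 ≤ x - ∑ j, (g j) ^ 2} ∂ν) +
          ENNReal.ofReal C).toReal :=
        ENNReal.toReal_mono (ENNReal.add_ne_top.2 ⟨hfin, ENNReal.ofReal_ne_top⟩) h1
    _ = (∫⁻ g : Fin n → ℝ,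
          gaussianReal 0 1 {a : ℝ | (a + l₂) ^ 2 ≤ x - ∑ j, (g j) ^ 2} ∂ν).toReal + C := by
        rw [ENNReal.toReal_add hfin ENNReal.ofReal_ne_top, ENNReal.toReal_ofReal hC0]

lemma stdphi_sup : (⨆ y : ℝ, stdphi y) = (Real.sqrt (2 * Real.pi))⁻¹ := by
  have hb : ∀ y : ℝ, stdphi y ≤ (Real.sqrt (2 * Real.pi))⁻¹ := by
    intro y
    unfold stdphi
    exact mul_le_of_le_one_right (by positivity)
      (Real.exp_le_one_iff.2 (by nlinarith [sq_nonneg y]))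
  refine le_antisymm (ciSup_le hb) ?_
  have h0 : stdphi 0 = (Real.sqrt (2 * Real.pi))⁻¹ := by simp [stdphi]
  rw [← h0]
  exact le_ciSup ⟨(Real.sqrt (2 * Real.pi))⁻¹, by rintro _ ⟨y, rfl⟩; exact hb y⟩ 0

lemma two_mul_inv_sqrt : 2 * (Real.sqrt (2 * Real.pi))⁻¹ = Real.sqrt (2 / Real.pi) := by
  have hπ : 0 < Real.pi := Real.pi_pos
  have h2 : Real.sqrt 2 * Real.sqrt 2 = 2 := Real.mul_self_sqrt (by norm_num)
  have hsπ : 0 < Real.sqrt Real.pi := Real.sqrt_pos.2 hπ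
  have hs2 : 0 < Real.sqrt 2 := Real.sqrt_pos.2 (by norm_num)
  rw [Real.sqrt_div (by norm_num : (0:ℝ) ≤ 2), Real.sqrt_mul (by norm_num : (0:ℝ) ≤ 2)]
  rw [mul_inv, eq_div_iff (ne_of_gt hsπ)]
  field_simp
  nlinarith [h2, hsπ.le, hs2.le]


/-- **Lipschitz bound for the noncentral chi-square CDF.** For `k ≥ 1`, `x ∈ ℝ` and
`λ₁, λ₂ ≥ 0`, `|F_k(x, λ₁²) − F_k(x, λ₂²)| ≤ 2 sup_y φ(y) · |λ₁ − λ₂| = √(2/π)·|λ₁ − λ₂|`. -/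
theorem ncChiSqCDF_lipschitz (k : ℕ) (hk : 1 ≤ k) (x : ℝ) (l₁ l₂ : ℝ)
    (h₁ : 0 ≤ l₁) (h₂ : 0 ≤ l₂) :
    |ncChiSqCDF k l₁ x - ncChiSqCDF k l₂ x| ≤ 2 * (⨆ y : ℝ, stdphi y) * |l₁ - l₂| ∧
      2 * (⨆ y : ℝ, stdphi y) * |l₁ - l₂| = Real.sqrt (2 / Real.pi) * |l₁ - l₂| := by
  obtain ⟨n, rfl⟩ : ∃ n, k = n + 1 := ⟨k - 1, by omega⟩
  rw [stdphi_sup]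
  refine ⟨?_, by rw [two_mul_inv_sqrt]⟩
  rw [abs_sub_le_iff]
  constructor
  · have := ncChiSq_le n x l₁ l₂
    linarith
  · have := ncChiSq_le n x l₂ l₁
    rw [abs_sub_comm] at this
    linarith
end

section
/- (Qualitative robustness, (2.16)) For every γ ≥ 0: sup over all probability distributions Π on ℝ and all ρ ≥ 0 of | W(ρ, γ, Π) − W(ρ, 0, Π) | is at most γ · √(2/π) · ‖(E_m − α₀ α₀ᵀ) P₀^{−1/2}‖ · sup_Π |δ(Π)|, which is finite and tends to 0 as γ → 0; in particular the limiting power W(ρ, γ, Π) is uniformly (in Π and ρ) equicontinuous in γ at γ = 0. -/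
open MeasureTheory ProbabilityTheory Filter Set
open scoped ENNReal NNReal Classical

lemma sqrt_two_div_pi_eq : Real.sqrt (2 / Real.pi) = 2 * (Real.sqrt (2 * Real.pi))⁻¹ := by
  have hπ : (0:ℝ) < Real.pi := Real.pi_pos
  have h2 : Real.sqrt 2 * Real.sqrt 2 = 2 := Real.mul_self_sqrt (by norm_num)
  have h2' : Real.sqrt 2 ≠ 0 := by positivity
  have hπ' : Real.sqrt Real.pi ≠ 0 := by positivity
  rw [Real.sqrt_div (by norm_num : (0:ℝ) ≤ 2), Real.sqrt_mul (by norm_num : (0:ℝ) ≤ 2)]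
  field_simp
  nlinarith [h2, Real.sqrt_nonneg Real.pi]

lemma gauss_Icc_le (u v : ℝ) :
    gaussianReal 0 1 (Set.Icc u v) ≤ ENNReal.ofReal ((v - u) * (Real.sqrt (2 * Real.pi))⁻¹) := by
  rw [gaussianReal_apply 0 one_ne_zero]
  have hb : ∀ x : ℝ, gaussianPDF 0 1 x ≤ ENNReal.ofReal (Real.sqrt (2 * Real.pi))⁻¹ := by
    intro x
    unfold gaussianPDF gaussianPDFReal
    apply ENNReal.ofReal_le_ofReal
    have h1 : Real.exp (-(x - 0) ^ 2 / (2 * (1:ℝ≥0))) ≤ 1 := by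
      rw [Real.exp_le_one_iff]
      have : (0:ℝ) ≤ (x - 0)^2 := sq_nonneg _
      have h2 : (0:ℝ) < 2 * (1:ℝ≥0) := by norm_num
      apply div_nonpos_of_nonpos_of_nonneg <;> [linarith; positivity]
    calc (Real.sqrt (2 * Real.pi * (1:ℝ≥0)))⁻¹ * Real.exp (-(x - 0) ^ 2 / (2 * (1:ℝ≥0)))
        ≤ (Real.sqrt (2 * Real.pi * (1:ℝ≥0)))⁻¹ * 1 := by
          apply mul_le_mul_of_nonneg_left h1 (by positivity)
      _ = (Real.sqrt (2 * Real.pi))⁻¹ := by norm_num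
  calc ∫⁻ x in Set.Icc u v, gaussianPDF 0 1 x
      ≤ ∫⁻ _ in Set.Icc u v, ENNReal.ofReal (Real.sqrt (2 * Real.pi))⁻¹ :=
        lintegral_mono fun x => hb x
    _ = ENNReal.ofReal (Real.sqrt (2 * Real.pi))⁻¹ * volume (Set.Icc u v) := by
        rw [setLIntegral_const]
    _ = ENNReal.ofReal (Real.sqrt (2 * Real.pi))⁻¹ * ENNReal.ofReal (v - u) := by
        rw [Real.volume_Icc]
    _ = ENNReal.ofReal ((v - u) * (Real.sqrt (2 * Real.pi))⁻¹) := by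
        rw [← ENNReal.ofReal_mul (by positivity), mul_comm]

lemma key1d (lam₁ lam₂ c : ℝ) :
    gaussianReal 0 1 {z : ℝ | (z + lam₁) ^ 2 ≤ c} ≤
      gaussianReal 0 1 {z : ℝ | (z + lam₂) ^ 2 ≤ c} +
        ENNReal.ofReal (Real.sqrt (2 / Real.pi) * |lam₁ - lam₂|) := by
  by_cases hc : 0 ≤ c
  · set r := Real.sqrt c with hr
    have hset : ∀ lam : ℝ, {z : ℝ | (z + lam) ^ 2 ≤ c} = Set.Icc (-lam - r) (-lam + r) := by
      intro lam
      ext z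
      simp only [Set.mem_setOf_eq, Set.mem_Icc]
      constructor
      · intro h
        have h1 : |z + lam| ≤ r := by
          rw [hr, ← Real.sqrt_sq_eq_abs]
          exact Real.sqrt_le_sqrt h
        rw [abs_le] at h1
        constructor <;> linarith [h1.1, h1.2]
      · intro h
        have h1 : |z + lam| ≤ r := by rw [abs_le]; constructor <;> linarith [h.1, h.2]
        have h2 : (z + lam) ^ 2 ≤ r ^ 2 := by
          rw [← sq_abs]
          exact pow_le_pow_left₀ (abs_nonneg _) h1 2
        rwa [hr, Real.sq_sqrt hc] at h2
    rw [hset lam₁, hset lam₂]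
    have hsub : Set.Icc (-lam₁ - r) (-lam₁ + r) ⊆
        Set.Icc (-lam₂ - r) (-lam₂ + r) ∪
          (Set.Icc (-lam₁ - r) (-lam₂ - r) ∪ Set.Icc (-lam₂ + r) (-lam₁ + r)) := by
      intro z hz
      simp only [Set.mem_Icc] at hz
      by_cases h1 : -lam₂ - r ≤ z ∧ z ≤ -lam₂ + r
      · exact Set.mem_union_left _ (Set.mem_Icc.2 h1)
      · push_neg at h1
        apply Set.mem_union_right
        rcases le_or_gt (-lam₂ - r) z with h2 | h2
        · exact Set.mem_union_right _ (Set.mem_Icc.2 ⟨by linarith [h1 h2], hz.2⟩)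
        · exact Set.mem_union_left _ (Set.mem_Icc.2 ⟨hz.1, h2.le⟩)
    have habs : ∀ d : ℝ, d ≤ |lam₁ - lam₂| → gaussianReal 0 1 (Set.Icc (0:ℝ) d) ≤ 1 := by
      intro _ _; exact prob_le_one
    calc gaussianReal 0 1 (Set.Icc (-lam₁ - r) (-lam₁ + r))
        ≤ gaussianReal 0 1 (Set.Icc (-lam₂ - r) (-lam₂ + r)) +
            (gaussianReal 0 1 (Set.Icc (-lam₁ - r) (-lam₂ - r)) +
              gaussianReal 0 1 (Set.Icc (-lam₂ + r) (-lam₁ + r))) :=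
          le_trans (measure_mono hsub) (le_trans (measure_union_le _ _)
            (add_le_add le_rfl (measure_union_le _ _)))
      _ ≤ gaussianReal 0 1 (Set.Icc (-lam₂ - r) (-lam₂ + r)) +
            (ENNReal.ofReal (|lam₁ - lam₂| * (Real.sqrt (2 * Real.pi))⁻¹) +
              ENNReal.ofReal (|lam₁ - lam₂| * (Real.sqrt (2 * Real.pi))⁻¹)) := by
          gcongr
          · refine le_trans (gauss_Icc_le _ _) (ENNReal.ofReal_le_ofReal ?_)
            have : -lam₂ - r - (-lam₁ - r) = lam₁ - lam₂ := by ring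
            rw [this]
            exact mul_le_mul_of_nonneg_right (le_abs_self _) (by positivity)
          · refine le_trans (gauss_Icc_le _ _) (ENNReal.ofReal_le_ofReal ?_)
            have : -lam₁ + r - (-lam₂ + r) = -(lam₁ - lam₂) := by ring
            rw [this]
            exact mul_le_mul_of_nonneg_right (neg_le_abs _) (by positivity)
      _ = gaussianReal 0 1 (Set.Icc (-lam₂ - r) (-lam₂ + r)) +
            ENNReal.ofReal (Real.sqrt (2 / Real.pi) * |lam₁ - lam₂|) := by
          rw [← ENNReal.ofReal_add (by positivity) (by positivity)]
          congr 1
          rw [sqrt_two_div_pi_eq]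
          ring
  · have hempty : ∀ lam : ℝ, {z : ℝ | (z + lam) ^ 2 ≤ c} = (∅ : Set ℝ) := by
      intro lam
      ext z
      simp only [Set.mem_setOf_eq, Set.mem_empty_iff_false, iff_false, not_le]
      nlinarith [sq_nonneg (z + lam)]
    rw [hempty lam₁, hempty lam₂]
    simp

lemma ncSet_measurable (k : ℕ) (lam x : ℝ) :
    MeasurableSet {zv : Fin k → ℝ | (∑ j, (zv j + if (j : ℕ) = 0 then lam else 0) ^ 2) ≤ x} := by
  have : Measurable fun zv : Fin k → ℝ =>
      (∑ j, (zv j + if (j : ℕ) = 0 then lam else 0) ^ 2) := by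
    apply Finset.measurable_sum
    intro j _
    exact ((measurable_pi_apply j).add_const _).pow_const 2
  exact this measurableSet_Iic

lemma ncChiSq_le_s8 (k : ℕ) (x a b : ℝ) :
    ncChiSqCDF k a x ≤ ncChiSqCDF k b x + Real.sqrt (2 / Real.pi) * |a - b| := by
  set c := ENNReal.ofReal (Real.sqrt (2 / Real.pi) * |a - b|) with hcdef
  cases k with
  | zero =>
    have : ∀ lam : ℝ, ncChiSqCDF 0 lam x = ncChiSqCDF 0 0 x := by
      intro lam; unfold ncChiSqCDF; simp
    rw [this a, this b]
    have : (0:ℝ) ≤ Real.sqrt (2 / Real.pi) * |a - b| := by positivity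
    linarith
  | succ n =>
    set γ := gaussianReal 0 1 with hγ
    set ν := Measure.pi (fun _ : Fin n => γ) with hν
    have key : ∀ lam : ℝ,
        (Measure.pi fun _ : Fin (n+1) => γ)
          {zv | (∑ j, (zv j + if (j : ℕ) = 0 then lam else 0) ^ 2) ≤ x} =
        ∫⁻ w, γ {z : ℝ | (z + lam) ^ 2 ≤ x - ∑ i : Fin n, (w i) ^ 2} ∂ν := by
      intro lam
      set S := {zv : Fin (n+1) → ℝ | (∑ j, (zv j + if (j : ℕ) = 0 then lam else 0) ^ 2) ≤ x}
        with hS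
      have hSm : MeasurableSet S := ncSet_measurable (n+1) lam x
      set e := MeasurableEquiv.piFinSuccAbove (fun _ : Fin (n+1) => ℝ) 0 with he
      have hmp : MeasurePreserving e (Measure.pi fun _ : Fin (n+1) => γ)
          (γ.prod ν) := measurePreserving_piFinSuccAbove (fun _ => γ) 0
      set A := {q : ℝ × (Fin n → ℝ) | (q.1 + lam) ^ 2 + ∑ i : Fin n, (q.2 i) ^ 2 ≤ x} with hA
      have hAm : MeasurableSet A := by
        have : Measurable fun q : ℝ × (Fin n → ℝ) =>
            (q.1 + lam) ^ 2 + ∑ i : Fin n, (q.2 i) ^ 2 := by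
          apply Measurable.add
          · exact (measurable_fst.add_const _).pow_const 2
          · apply Finset.measurable_sum
            intro i _
            exact ((measurable_pi_apply i).comp measurable_snd).pow_const 2
        exact this measurableSet_Iic
      have hpre : e ⁻¹' A = S := by
        ext zv
        simp only [Set.mem_preimage, hA, Set.mem_setOf_eq, hS]
        have he1 : (e zv).1 = zv 0 := rfl
        have he2 : ∀ i : Fin n, (e zv).2 i = zv i.succ := by
          intro i; rfl
        rw [he1]
        have hsum : (∑ j : Fin (n+1), (zv j + if (j : ℕ) = 0 then lam else 0) ^ 2) =
            (zv 0 + lam) ^ 2 + ∑ i : Fin n, (zv i.succ) ^ 2 := by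
          rw [Fin.sum_univ_succ]
          simp
        constructor
        · intro h
          rw [hsum]
          convert h using 2
          simp only [he2]
        · intro h
          rw [hsum] at h
          convert h using 2
          simp only [he2]
      have h1 : (Measure.pi fun _ : Fin (n+1) => γ) S = (γ.prod ν) A := by
        rw [← hpre]
        exact hmp.measure_preimage_equiv A
      have h2 : (γ.prod ν) A = (ν.prod γ) (Prod.swap ⁻¹' A) := by
        rw [← Measure.prod_swap, Measure.map_apply measurable_swap hAm]
      rw [h1, h2, Measure.prod_apply (measurable_swap hAm)]
      congr 1
      ext w
      congr 1
      ext z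
      simp only [Set.mem_preimage, Set.mem_setOf_eq, Prod.swap_prod_mk, hA]
      constructor <;> intro h <;> linarith
    have hle : (Measure.pi fun _ : Fin (n+1) => γ)
          {zv | (∑ j, (zv j + if (j : ℕ) = 0 then a else 0) ^ 2) ≤ x} ≤
        (Measure.pi fun _ : Fin (n+1) => γ)
          {zv | (∑ j, (zv j + if (j : ℕ) = 0 then b else 0) ^ 2) ≤ x} + c := by
      rw [key a, key b]
      calc ∫⁻ w, γ {z : ℝ | (z + a) ^ 2 ≤ x - ∑ i : Fin n, (w i) ^ 2} ∂ν
          ≤ ∫⁻ w, (γ {z : ℝ | (z + b) ^ 2 ≤ x - ∑ i : Fin n, (w i) ^ 2} + c) ∂ν :=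
            lintegral_mono fun w => key1d a b _
        _ = (∫⁻ w, γ {z : ℝ | (z + b) ^ 2 ≤ x - ∑ i : Fin n, (w i) ^ 2} ∂ν) + c * ν Set.univ := by
            rw [lintegral_add_right _ measurable_const, lintegral_const]
        _ = (∫⁻ w, γ {z : ℝ | (z + b) ^ 2 ≤ x - ∑ i : Fin n, (w i) ^ 2} ∂ν) + c := by
            rw [measure_univ, mul_one]
    have hfin : (Measure.pi fun _ : Fin (n+1) => γ)
        {zv | (∑ j, (zv j + if (j : ℕ) = 0 then b else 0) ^ 2) ≤ x} ≠ ⊤ :=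
      measure_ne_top _ _
    unfold ncChiSqCDF
    calc ((Measure.pi fun _ : Fin (n+1) => γ)
          {zv | (∑ j, (zv j + if (j : ℕ) = 0 then a else 0) ^ 2) ≤ x}).toReal
        ≤ ((Measure.pi fun _ : Fin (n+1) => γ)
          {zv | (∑ j, (zv j + if (j : ℕ) = 0 then b else 0) ^ 2) ≤ x} + c).toReal := by
          apply ENNReal.toReal_mono _ hle
          exact ENNReal.add_ne_top.2 ⟨hfin, ENNReal.ofReal_ne_top⟩
      _ = ((Measure.pi fun _ : Fin (n+1) => γ)
          {zv | (∑ j, (zv j + if (j : ℕ) = 0 then b else 0) ^ 2) ≤ x}).toReal +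
            Real.sqrt (2 / Real.pi) * |a - b| := by
          rw [ENNReal.toReal_add hfin ENNReal.ofReal_ne_top,
            ENNReal.toReal_ofReal (by positivity)]

lemma ncChiSq_lip (k : ℕ) (x a b : ℝ) :
    |ncChiSqCDF k a x - ncChiSqCDF k b x| ≤ Real.sqrt (2 / Real.pi) * |a - b| := by
  rw [abs_sub_le_iff]
  refine ⟨by linarith [ncChiSq_le_s8 k x a b], ?_⟩
  have := ncChiSq_le_s8 k x b a
  rw [abs_sub_comm] at this
  linarith

lemma sum_Icc_one_fin (m : ℕ) (f : ℕ → ℝ) :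
    ∑ j ∈ Finset.Icc 1 m, f j = ∑ i : Fin m, f ((i : ℕ) + 1) := by
  rw [← Finset.Ico_add_one_right_eq_Icc, Finset.sum_Ico_eq_sum_range,
    show m + 1 - 1 = m from rfl, Finset.sum_range fun i => f (1 + i)]
  exact Finset.sum_congr rfl fun i _ => by rw [Nat.add_comm]

lemma stdPhi_nonneg (x : ℝ) : 0 ≤ stdPhi x := ENNReal.toReal_nonneg

lemma stdPhi_le_one (x : ℝ) : stdPhi x ≤ 1 := by
  unfold stdPhi
  have h := prob_le_one (μ := gaussianReal 0 1) (s := Set.Iic x)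
  calc (gaussianReal 0 1 (Set.Iic x)).toReal ≤ (1 : ℝ≥0∞).toReal :=
        ENNReal.toReal_mono (by norm_num) h
    _ = 1 := by simp

lemma abs_integral_stdPhi (PiM : Measure ℝ) [IsProbabilityMeasure PiM] (g : ℝ → ℝ) :
    |∫ u, stdPhi (g u) ∂PiM| ≤ 1 := by
  have h := norm_integral_le_of_norm_le_const (μ := PiM) (C := 1)
    (f := fun u => stdPhi (g u)) (ae_of_all _ fun u => by
      rw [Real.norm_eq_abs, abs_of_nonneg (stdPhi_nonneg _)]
      exact stdPhi_le_one _)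
  rw [Real.norm_eq_abs] at h
  simpa [measure_univ] using h

lemma abs_Delta0_le {p : ℕ} (β : Fin p → ℝ) (θ₀ : ℝ) (PiM : Measure ℝ)
    [IsProbabilityMeasure PiM] (x : ℝ) : |Delta0 β θ₀ PiM x| ≤ 2 * (p + 1) := by
  unfold Delta0
  have hterm : ∀ g : ℝ → ℝ,
      |(∫ u, stdPhi (g u) ∂PiM) - stdPhi (x / θ₀)| ≤ 2 := by
    intro g
    calc |(∫ u, stdPhi (g u) ∂PiM) - stdPhi (x / θ₀)|
        ≤ |∫ u, stdPhi (g u) ∂PiM| + |stdPhi (x / θ₀)| := abs_sub _ _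
      _ ≤ 1 + 1 := by
          refine add_le_add (abs_integral_stdPhi PiM g) ?_
          rw [abs_of_nonneg (stdPhi_nonneg _)]
          exact stdPhi_le_one _
      _ = 2 := by norm_num
  calc |((∫ u, stdPhi ((x + (-1) * u) / θ₀) ∂PiM) - stdPhi (x / θ₀)) +
        ∑ j : Fin p, ((∫ u, stdPhi ((x + β j * u) / θ₀) ∂PiM) - stdPhi (x / θ₀))|
      ≤ |(∫ u, stdPhi ((x + (-1) * u) / θ₀) ∂PiM) - stdPhi (x / θ₀)| +
        |∑ j : Fin p, ((∫ u, stdPhi ((x + β j * u) / θ₀) ∂PiM) - stdPhi (x / θ₀))| :=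
        abs_add_le _ _
    _ ≤ 2 + ∑ j : Fin p, (2 : ℝ) := by
        refine add_le_add (hterm _) (le_trans (Finset.abs_sum_le_sum_abs _ _) ?_)
        exact Finset.sum_le_sum fun j _ => hterm _
    _ = 2 * (p + 1) := by
        rw [Finset.sum_const, Finset.card_univ, Fintype.card_fin]
        push_cast
        ring

lemma abs_DeltaS_le {p : ℕ} (β : Fin p → ℝ) (θ₀ : ℝ) (PiM : Measure ℝ)
    [IsProbabilityMeasure PiM] (x : ℝ) : |DeltaS β θ₀ PiM x| ≤ 2 * (p + 1) := by
  unfold DeltaS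
  rw [abs_div, abs_two]
  have h1 := abs_Delta0_le β θ₀ PiM x
  have h2 := abs_Delta0_le β θ₀ PiM (-x)
  have h3 : |Delta0 β θ₀ PiM x - Delta0 β θ₀ PiM (-x)| ≤ 4 * (p + 1) := by
    calc |Delta0 β θ₀ PiM x - Delta0 β θ₀ PiM (-x)|
        ≤ |Delta0 β θ₀ PiM x| + |Delta0 β θ₀ PiM (-x)| := abs_sub _ _
      _ ≤ 4 * (p + 1) := by linarith
  linarith [h3]

lemma abs_deltaCell_le {p : ℕ} (β : Fin p → ℝ) (θ₀ : ℝ) (m : ℕ) (xpt : ℕ → ℝ)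
    (PiM : Measure ℝ) [IsProbabilityMeasure PiM] (j : ℕ) :
    |deltaCell β θ₀ m xpt PiM j| ≤ 8 * (p + 1) := by
  unfold deltaCell
  split
  · have h1 := abs_DeltaS_le β θ₀ PiM (xpt j)
    have h2 := abs_DeltaS_le β θ₀ PiM (xpt (j - 1))
    have : |DeltaS β θ₀ PiM (xpt j) - DeltaS β θ₀ PiM (xpt (j - 1))| ≤ 4 * (p + 1) := by
      calc |DeltaS β θ₀ PiM (xpt j) - DeltaS β θ₀ PiM (xpt (j - 1))|
          ≤ |DeltaS β θ₀ PiM (xpt j)| + |DeltaS β θ₀ PiM (xpt (j - 1))| := abs_sub _ _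
        _ ≤ 4 * (p + 1) := by linarith
    rw [abs_mul, abs_two]
    linarith [this]
  · have h2 := abs_DeltaS_le β θ₀ PiM (xpt (m - 1))
    rw [abs_mul, abs_two, zero_sub, abs_neg]
    linarith

lemma deltaNorm_le {p : ℕ} (β : Fin p → ℝ) (θ₀ : ℝ) (m : ℕ) (xpt : ℕ → ℝ)
    (PiM : Measure ℝ) [IsProbabilityMeasure PiM] :
    deltaNorm β θ₀ m xpt PiM ≤ Real.sqrt (m * (8 * (p + 1)) ^ 2) := by
  unfold deltaNorm
  apply Real.sqrt_le_sqrt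
  calc ∑ j ∈ Finset.Icc 1 m, (deltaCell β θ₀ m xpt PiM j) ^ 2
      ≤ ∑ _j ∈ Finset.Icc 1 m, (8 * ((p : ℝ) + 1)) ^ 2 := by
        refine Finset.sum_le_sum fun j _ => ?_
        rw [← sq_abs]
        apply pow_le_pow_left₀ (abs_nonneg _) (abs_deltaCell_le β θ₀ m xpt PiM j)
    _ = m * (8 * ((p : ℝ) + 1)) ^ 2 := by
        rw [Finset.sum_const, Nat.card_Icc]
        simp [nsmul_eq_mul]


lemma lamSq_eq (m : ℕ) (xpt : ℕ → ℝ) (θ₀ : ℝ) (w : ℕ → ℝ) :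
    lamSq m xpt θ₀ w = ∑ j ∈ Finset.Icc 1 m,
      (w j / Real.sqrt (pcell m xpt θ₀ j) -
        (∑ i ∈ Finset.Icc 1 m, alpha0 m xpt θ₀ i * (w i / Real.sqrt (pcell m xpt θ₀ i))) *
          alpha0 m xpt θ₀ j) ^ 2 := by
  unfold lamSq alpha0
  rfl

lemma sqrt_lamSq_eq_norm (m : ℕ) (xpt : ℕ → ℝ) (θ₀ : ℝ) (w : ℕ → ℝ) :
    Real.sqrt (lamSq m xpt θ₀ w) =
      ‖(LinearMap.toContinuousLinearMap (Matrix.toEuclideanLin (projMat m xpt θ₀)))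
        ((WithLp.equiv 2 (Fin m → ℝ)).symm fun i : Fin m => w ((i : ℕ) + 1))‖ := by
  have hentry : ∀ i : Fin m,
      ((LinearMap.toContinuousLinearMap (Matrix.toEuclideanLin (projMat m xpt θ₀)))
        ((WithLp.equiv 2 (Fin m → ℝ)).symm fun i : Fin m => w ((i : ℕ) + 1))) i =
      w ((i : ℕ) + 1) / Real.sqrt (pcell m xpt θ₀ ((i : ℕ) + 1)) -
        (∑ l : Fin m, alpha0 m xpt θ₀ ((l : ℕ) + 1) *
          (w ((l : ℕ) + 1) / Real.sqrt (pcell m xpt θ₀ ((l : ℕ) + 1)))) *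
            alpha0 m xpt θ₀ ((i : ℕ) + 1) := by
    intro i
    rw [LinearMap.coe_toContinuousLinearMap', Matrix.toEuclideanLin_apply]
    show ((projMat m xpt θ₀).mulVec fun i : Fin m => w ((i : ℕ) + 1)) i = _
    unfold Matrix.mulVec dotProduct projMat
    simp only [Matrix.of_apply]
    have hterm : ∀ j : Fin m,
        ((if i = j then (1:ℝ) else 0) - alpha0 m xpt θ₀ ((i : ℕ) + 1) *
          alpha0 m xpt θ₀ ((j : ℕ) + 1)) *
            (Real.sqrt (pcell m xpt θ₀ ((j : ℕ) + 1)))⁻¹ * w ((j : ℕ) + 1) =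
        (if i = j then w ((j : ℕ) + 1) / Real.sqrt (pcell m xpt θ₀ ((j : ℕ) + 1)) else 0) -
          alpha0 m xpt θ₀ ((i : ℕ) + 1) * (alpha0 m xpt θ₀ ((j : ℕ) + 1) *
            (w ((j : ℕ) + 1) / Real.sqrt (pcell m xpt θ₀ ((j : ℕ) + 1)))) := by
      intro j
      by_cases h : i = j <;> simp only [h, if_true, if_false] <;>
        rw [div_eq_mul_inv] <;> ring
    rw [Finset.sum_congr rfl fun j _ => hterm j, Finset.sum_sub_distrib,
      Finset.sum_ite_eq Finset.univ i
        (fun j => w ((j : ℕ) + 1) / Real.sqrt (pcell m xpt θ₀ ((j : ℕ) + 1))),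
      ← Finset.mul_sum]
    simp only [Finset.mem_univ, if_true]
    ring
  rw [EuclideanSpace.norm_eq]
  congr 1
  rw [lamSq_eq,
    sum_Icc_one_fin m (fun l => alpha0 m xpt θ₀ l * (w l / Real.sqrt (pcell m xpt θ₀ l))),
    sum_Icc_one_fin m]
  refine Finset.sum_congr rfl fun i _ => ?_
  rw [hentry i, Real.norm_eq_abs, sq_abs]

/-- **Qualitative robustness (2.16).** The limiting power
`W(ρ, γ, Π) = 1 − F_{m−2}(χ_{m−2}(1−α), λ̂²(ρ, γ, Π))` satisfies
`sup_{Π, ρ ≥ 0} |W(ρ, γ, Π) − W(ρ, 0, Π)| ≤ γ √(2/π) ‖(E_m − α₀α₀ᵀ)P₀^{−1/2}‖ · sup_Π |δ(Π)|`,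
where `sup_Π |δ(Π)|` is finite, and the bound tends to `0` as `γ → 0⁺`; hence the limiting
power is uniformly (in `Π` and `ρ`) equicontinuous in `γ` at `γ = 0`. -/
theorem symm_pearson_qualitative_robustness
    -- AR(p) coefficients and scale
    (p : ℕ) (hp : 1 ≤ p) (β : Fin p → ℝ) (θ₀ : ℝ) (hθ₀ : 0 < θ₀)
    -- Conditions (i)–(iii) on `H`
    (H : ℝ → ℝ) (μH : Measure ℝ) (hμH : IsProbabilityMeasure μH)
    (hHcdf : ∀ x, H x = (μH (Set.Iic x)).toReal)
    (hHmean : (∫ u, u ∂μH) = 0)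
    (hHvar : Integrable (fun u => u ^ 2) μH)
    (hHsmooth : ∃ (H' H'' : ℝ → ℝ) (C : ℝ), (∀ x, HasDerivAt H (H' x) x) ∧
      (∀ x, HasDerivAt H' (H'' x) x) ∧ ∀ x, |H'' x| ≤ C)
    (hHsymm : ∀ x, H (-x) = 1 - H x)
    -- the partition `0 = x₀ < x₁ < ⋯ < x_{m−1} < x_m = ∞`
    (m : ℕ) (hm : 2 < m) (xpt : ℕ → ℝ) (hx0 : xpt 0 = 0)
    (hxmono : ∀ j, j + 1 ≤ m - 1 → xpt j < xpt (j + 1))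
    -- the asymptotic level and the chi-square quantile `q = χ_{m−2}(1−α)`
    (α : ℝ) (hα : 0 < α ∧ α < 1)
    (q : ℝ) (hq : ncChiSqCDF (m - 2) 0 q = 1 - α)
    -- the asymptotic power `W` and the supremum `sup_Π |δ(Π)|`
    (W : ℝ → ℝ → Measure ℝ → ℝ)
    (hW : ∀ ρ γ PiM, W ρ γ PiM = 1 - ncChiSqCDF (m - 2)
      (Real.sqrt (lamSq m xpt θ₀ (fun j =>
        ρ * (cellProb m xpt H j - pcell m xpt θ₀ j) +
          γ * deltaCell β θ₀ m xpt PiM j))) q)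
    (sΔ : ℝ)
    (hsΔ : sΔ = sSup {r : ℝ | ∃ PiM : Measure ℝ,
      IsProbabilityMeasure PiM ∧ r = deltaNorm β θ₀ m xpt PiM})
    -- conclusion
    : BddAbove {r : ℝ | ∃ PiM : Measure ℝ,
        IsProbabilityMeasure PiM ∧ r = deltaNorm β θ₀ m xpt PiM} ∧
      (∀ γ : ℝ, 0 ≤ γ → ∀ PiM : Measure ℝ, IsProbabilityMeasure PiM → ∀ ρ : ℝ, 0 ≤ ρ →
        |W ρ γ PiM - W ρ 0 PiM| ≤
          γ * Real.sqrt (2 / Real.pi) * projMatNorm m xpt θ₀ * sΔ) ∧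
      Tendsto (fun γ : ℝ => γ * Real.sqrt (2 / Real.pi) * projMatNorm m xpt θ₀ * sΔ)
        (nhdsWithin 0 (Set.Ici 0)) (nhds 0)  := by
  have hBdd : BddAbove {r : ℝ | ∃ PiM : Measure ℝ,
      IsProbabilityMeasure PiM ∧ r = deltaNorm β θ₀ m xpt PiM} := by
    refine ⟨Real.sqrt (m * (8 * (p + 1)) ^ 2), ?_⟩
    rintro r ⟨PiM, hPiM, rfl⟩
    haveI := hPiM
    exact deltaNorm_le β θ₀ m xpt PiM
  refine ⟨hBdd, ?_, ?_⟩
  · intro γ hγ PiM hPiM ρ hρ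
    haveI := hPiM
    rw [hW, hW]
    set L := LinearMap.toContinuousLinearMap (Matrix.toEuclideanLin (projMat m xpt θ₀)) with hL
    set wγ : ℕ → ℝ := fun j => ρ * (cellProb m xpt H j - pcell m xpt θ₀ j) +
      γ * deltaCell β θ₀ m xpt PiM j with hwγ
    set w₀ : ℕ → ℝ := fun j => ρ * (cellProb m xpt H j - pcell m xpt θ₀ j) +
      0 * deltaCell β θ₀ m xpt PiM j with hw₀
    set vγ := (WithLp.equiv 2 (Fin m → ℝ)).symm fun i : Fin m => wγ ((i : ℕ) + 1) with hvγ
    set v₀ := (WithLp.equiv 2 (Fin m → ℝ)).symm fun i : Fin m => w₀ ((i : ℕ) + 1) with hv₀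
    set vδ := (WithLp.equiv 2 (Fin m → ℝ)).symm
      (fun i : Fin m => deltaCell β θ₀ m xpt PiM ((i : ℕ) + 1)) with hvδ
    have hnormδ : ‖vδ‖ = deltaNorm β θ₀ m xpt PiM := by
      rw [EuclideanSpace.norm_eq]
      unfold deltaNorm
      congr 1
      rw [sum_Icc_one_fin m (fun j => (deltaCell β θ₀ m xpt PiM j) ^ 2)]
      refine Finset.sum_congr rfl fun i _ => ?_
      rw [hvδ, WithLp.equiv_symm_apply, PiLp.toLp_apply, Real.norm_eq_abs, sq_abs]
    have hdiff : vγ - v₀ = γ • vδ := by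
      ext i
      simp only [hvγ, hv₀, hvδ, PiLp.sub_apply, PiLp.smul_apply,
        WithLp.equiv_symm_apply, PiLp.toLp_apply, smul_eq_mul, hwγ, hw₀]
      ring
    have hlipargs : |Real.sqrt (lamSq m xpt θ₀ wγ) - Real.sqrt (lamSq m xpt θ₀ w₀)| ≤
        γ * (‖L‖ * ‖vδ‖) := by
      rw [sqrt_lamSq_eq_norm, sqrt_lamSq_eq_norm, ← hL, ← hvγ, ← hv₀]
      calc |‖L vγ‖ - ‖L v₀‖| ≤ ‖L vγ - L v₀‖ := abs_norm_sub_norm_le _ _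
        _ = ‖L (vγ - v₀)‖ := by rw [map_sub]
        _ = ‖L (γ • vδ)‖ := by rw [hdiff]
        _ = |γ| * ‖L vδ‖ := by rw [_root_.map_smul, norm_smul, Real.norm_eq_abs]
        _ = γ * ‖L vδ‖ := by rw [abs_of_nonneg hγ]
        _ ≤ γ * (‖L‖ * ‖vδ‖) := by
            exact mul_le_mul_of_nonneg_left (L.le_opNorm vδ) hγ
    have hsle : deltaNorm β θ₀ m xpt PiM ≤ sΔ := by
      rw [hsΔ]
      exact le_csSup hBdd ⟨PiM, hPiM, rfl⟩
    have hmain : |(1 - ncChiSqCDF (m - 2) (Real.sqrt (lamSq m xpt θ₀ wγ)) q) -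
        (1 - ncChiSqCDF (m - 2) (Real.sqrt (lamSq m xpt θ₀ w₀)) q)| ≤
        γ * Real.sqrt (2 / Real.pi) * projMatNorm m xpt θ₀ * sΔ := by
      have heq : (1 - ncChiSqCDF (m - 2) (Real.sqrt (lamSq m xpt θ₀ wγ)) q) -
          (1 - ncChiSqCDF (m - 2) (Real.sqrt (lamSq m xpt θ₀ w₀)) q) =
          -(ncChiSqCDF (m - 2) (Real.sqrt (lamSq m xpt θ₀ wγ)) q -
            ncChiSqCDF (m - 2) (Real.sqrt (lamSq m xpt θ₀ w₀)) q) := by ring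
      rw [heq, abs_neg]
      calc |ncChiSqCDF (m - 2) (Real.sqrt (lamSq m xpt θ₀ wγ)) q -
            ncChiSqCDF (m - 2) (Real.sqrt (lamSq m xpt θ₀ w₀)) q|
          ≤ Real.sqrt (2 / Real.pi) *
            |Real.sqrt (lamSq m xpt θ₀ wγ) - Real.sqrt (lamSq m xpt θ₀ w₀)| :=
            ncChiSq_lip (m - 2) q _ _
        _ ≤ Real.sqrt (2 / Real.pi) * (γ * (‖L‖ * ‖vδ‖)) :=
            mul_le_mul_of_nonneg_left hlipargs (Real.sqrt_nonneg _)
        _ = γ * Real.sqrt (2 / Real.pi) * projMatNorm m xpt θ₀ * ‖vδ‖ := by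
            rw [hL]; unfold projMatNorm; ring
        _ ≤ γ * Real.sqrt (2 / Real.pi) * projMatNorm m xpt θ₀ * sΔ := by
            apply mul_le_mul_of_nonneg_left _ _
            · rw [hnormδ]; exact hsle
            · have h1 : 0 ≤ projMatNorm m xpt θ₀ := norm_nonneg _
              positivity
    exact hmain
  · have hc : Continuous fun γ : ℝ =>
        γ * Real.sqrt (2 / Real.pi) * projMatNorm m xpt θ₀ * sΔ := by
      continuity
    exact tendsto_nhdsWithin_of_tendsto_nhds (hc.tendsto' 0 0 (by simp))
end
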